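/- Let Q be an m×m matrix admitting the eigendecomposition Q = V Λ Uᵀ, where Λ = diag(λ₁,…,λ_m) has pairwise distinct entries and Uᵀ = V⁻¹. Then for any m×m matrix M and any real Δ, the directional derivative series of the matrix exponential satisfies Σ_{n=1}^∞ (Δⁿ/n!) Σ_{j=0}^{n−1} Q^j M Q^{n−1−j} = V ( (Uᵀ M V) ∘ X(Λ,Δ) ) Uᵀ, where ∘ is the Hadamard product and X(Λ,Δ) is the matrix with X_{ii} = Δ·e^{Δλ_i} and X_{ij} = (e^{Δλ_i} − e^{Δλ_j})/(λ_i − λ_j) for i ≠ j. In particular, ∂T(Δ)/∂θ_u = V((Uᵀ(∂Q/∂θ_u)V) ∘ X(Λ,Δ))Uᵀ for T(Δ) = exp(ΔQ). -/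

import Mathlib

attribute [local instance] Matrix.linftyOpNormedRing Matrix.linftyOpNormedAlgebra

open Finset

lemma hs_diag (Δ x : ℝ) :
    HasSum (fun n : ℕ => if n = 0 then (0:ℝ) else (Δ ^ n / n.factorial) * (n * x ^ (n-1)))
      (Δ * Real.exp (Δ * x)) := by
  rw [← hasSum_nat_add_iff' 1]
  norm_num
  have h := (NormedSpace.expSeries_div_hasSum_exp (Δ * x)).mul_left Δ
  rw [← Real.exp_eq_exp_ℝ] at h
  suffices hf : (fun n : ℕ => Δ ^ (n + 1) / ((n + 1).factorial : ℝ) * (((n:ℝ) + 1) * x ^ n)) = fun n => Δ * ((Δ * x) ^ n / (n.factorial : ℝ)) by rw [hf]; exact h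
  funext n
  have h1 : ((n+1).factorial : ℝ) = (n+1) * n.factorial := by
    rw [Nat.factorial_succ]; push_cast; ring
  have h2 : (n.factorial : ℝ) ≠ 0 := Nat.cast_ne_zero.2 n.factorial_ne_zero
  have h3 : ((n:ℝ)+1) ≠ 0 := by positivity
  push_cast
  simp only [Nat.add_sub_cancel, h1, mul_pow, pow_succ]
  field_simp

lemma hs_off (Δ x y : ℝ) (hxy : x ≠ y) :
    HasSum (fun n : ℕ => if n = 0 then (0:ℝ) else
        (Δ ^ n / n.factorial) * ∑ j ∈ Finset.range n, x ^ j * y ^ (n-1-j))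
      ((Real.exp (Δ * x) - Real.exp (Δ * y)) / (x - y)) := by
  have hxy' : x - y ≠ 0 := sub_ne_zero.2 hxy
  have key : (fun n : ℕ => if n = 0 then (0:ℝ) else
        (Δ ^ n / n.factorial) * ∑ j ∈ Finset.range n, x ^ j * y ^ (n-1-j))
      = fun n : ℕ => ((Δ*x) ^ n / n.factorial - (Δ*y) ^ n / n.factorial) * (x - y)⁻¹ := by
    funext n
    rcases Nat.eq_zero_or_pos n with h | h
    · subst h; simp
    · rw [if_neg h.ne']
      have hg : (∑ j ∈ Finset.range n, x ^ j * y ^ (n-1-j)) * (x - y) = x ^ n - y ^ n :=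
        geom_sum₂_mul x y n
      have h2 : (n.factorial : ℝ) ≠ 0 := Nat.cast_ne_zero.2 n.factorial_ne_zero
      have hs : (∑ j ∈ Finset.range n, x ^ j * y ^ (n-1-j)) = (x ^ n - y ^ n) / (x - y) := by
        field_simp [← hg]
        exact hg
      rw [hs, mul_pow, mul_pow]
      field_simp
  rw [key]
  have h1 := ((NormedSpace.expSeries_div_hasSum_exp (Δ * x)).sub
    (NormedSpace.expSeries_div_hasSum_exp (Δ * y))).mul_right (x - y)⁻¹
  rw [← Real.exp_eq_exp_ℝ] at h1
  rwa [div_eq_mul_inv]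


lemma part1 (m : ℕ)
    (Q V U : Matrix (Fin m) (Fin m) ℝ) (lam : Fin m → ℝ)
    (hdist : Function.Injective lam)
    (hV : IsUnit V.det)
    (hU : U.transpose = V⁻¹)
    (hQ : Q = V * Matrix.diagonal lam * U.transpose)
    (M : Matrix (Fin m) (Fin m) ℝ) (Δ : ℝ) :
    HasSum (fun n : ℕ => if n = 0 then (0 : Matrix (Fin m) (Fin m) ℝ) else
        (Δ ^ n / (n.factorial : ℝ)) • ∑ j ∈ Finset.range n, Q ^ j * M * Q ^ (n - 1 - j))
      (V * Matrix.hadamard (U.transpose * M * V) (Matrix.of fun i j =>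
        if i = j then Δ * Real.exp (Δ * lam i)
        else (Real.exp (Δ * lam i) - Real.exp (Δ * lam j)) / (lam i - lam j)) * U.transpose) := by
  have hUV : U.transpose * V = 1 := by rw [hU]; exact Matrix.nonsing_inv_mul V hV
  have hVU : V * U.transpose = 1 := by rw [hU]; exact Matrix.mul_nonsing_inv V hV
  set N : Matrix (Fin m) (Fin m) ℝ := U.transpose * M * V with hN
  set X : Matrix (Fin m) (Fin m) ℝ := Matrix.of fun i j =>
        if i = j then Δ * Real.exp (Δ * lam i)
        else (Real.exp (Δ * lam i) - Real.exp (Δ * lam j)) / (lam i - lam j) with hXdef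
  set C : ℕ → Matrix (Fin m) (Fin m) ℝ := fun n => Matrix.of fun i k =>
      if n = 0 then (0:ℝ) else (Δ ^ n / n.factorial) * ∑ j ∈ Finset.range n,
        lam i ^ j * lam k ^ (n-1-j) with hC
  -- entrywise hasSum
  have hentry : ∀ i k, HasSum (fun n => N i k * C n i k) (N i k * X i k) := by
    intro i k
    rcases eq_or_ne i k with rfl | hik
    · have hCd : ∀ n : ℕ, C n i i = if n = 0 then (0:ℝ) else
          (Δ ^ n / n.factorial) * (n * lam i ^ (n-1)) := by
        intro n
        rcases Nat.eq_zero_or_pos n with h | h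
        · simp [hC, h]
        · have h5 : ∑ j ∈ Finset.range n, lam i ^ j * lam i ^ (n-1-j)
              = ∑ j ∈ Finset.range n, lam i ^ (n-1) := by
            refine Finset.sum_congr rfl fun j hj => ?_
            rw [Finset.mem_range] at hj
            rw [← pow_add]
            congr 1
            omega
          simp [hC, h.ne', h5, Finset.sum_const, Finset.card_range, nsmul_eq_mul]
      have h6 : X i i = Δ * Real.exp (Δ * lam i) := by simp [hXdef]
      simp only [hCd]
      rw [h6]
      exact (hs_diag Δ (lam i)).mul_left (N i i)
    · have hlam : lam i ≠ lam k := fun h => hik (hdist h)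
      have h6 : X i k = (Real.exp (Δ * lam i) - Real.exp (Δ * lam k)) / (lam i - lam k) := by
        simp [hXdef, hik]
      rw [h6]
      exact (hs_off Δ (lam i) (lam k) hlam).mul_left (N i k)
  have hmat : HasSum (fun n => Matrix.hadamard N (C n)) (Matrix.hadamard N X) := by
    refine Pi.hasSum.mpr ?_
    intro i
    refine Pi.hasSum.mpr ?_
    intro k
    exact hentry i k
  have h2 := (hmat.mul_left V).mul_right U.transpose
  -- identify terms
  have hQpow : ∀ j : ℕ, Q ^ j = V * Matrix.diagonal (lam ^ j) * U.transpose := by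
    intro j
    induction j with
    | zero =>
      have hd1 : Matrix.diagonal ((1 : Fin m → ℝ)) = (1 : Matrix (Fin m) (Fin m) ℝ) :=
        Matrix.diagonal_one
      rw [pow_zero, pow_zero, hd1, Matrix.mul_one, hVU]
    | succ j ih =>
      rw [pow_succ, ih, hQ]
      calc V * Matrix.diagonal (lam ^ j) * U.transpose * (V * Matrix.diagonal lam * U.transpose)
          = V * Matrix.diagonal (lam ^ j) * (U.transpose * V) * Matrix.diagonal lam * U.transpose := by
            simp only [Matrix.mul_assoc]
        _ = V * (Matrix.diagonal (lam ^ j) * Matrix.diagonal lam) * U.transpose := by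
            rw [hUV]; simp only [Matrix.mul_one, Matrix.mul_assoc]
        _ = V * Matrix.diagonal (lam ^ (j+1)) * U.transpose := by
            rw [Matrix.diagonal_mul_diagonal]
            have hp : (fun i => (lam ^ j) i * lam i) = lam ^ (j+1) := by
              funext i; simp [pow_succ]
            rw [hp]
  have hterm : ∀ n : ℕ, (if n = 0 then (0 : Matrix (Fin m) (Fin m) ℝ) else
      (Δ ^ n / (n.factorial : ℝ)) • ∑ j ∈ Finset.range n, Q ^ j * M * Q ^ (n - 1 - j))
      = V * Matrix.hadamard N (C n) * U.transpose := by
    intro n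
    rcases Nat.eq_zero_or_pos n with h | h
    · subst h
      have hc0 : C 0 = 0 := by ext i k; simp [hC]
      rw [if_pos rfl, hc0, Matrix.hadamard_zero, Matrix.mul_zero, Matrix.zero_mul]
    · rw [if_neg h.ne']
      have hterm2 : ∀ j, Q ^ j * M * Q ^ (n-1-j)
          = V * (Matrix.diagonal (lam ^ j) * N * Matrix.diagonal (lam ^ (n-1-j))) * U.transpose := by
        intro j
        rw [hQpow j, hQpow (n-1-j), hN]
        simp only [Matrix.mul_assoc]
      rw [Finset.sum_congr rfl fun j _ => hterm2 j]
      rw [← Finset.sum_mul, ← Finset.mul_sum]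
      have hmain : (Δ ^ n / (n.factorial:ℝ)) • (∑ j ∈ Finset.range n,
          Matrix.diagonal (lam ^ j) * N * Matrix.diagonal (lam ^ (n-1-j)))
          = Matrix.hadamard N (C n) := by
        ext i k
        simp only [Matrix.smul_apply, Matrix.sum_apply, Matrix.mul_diagonal,
          Matrix.diagonal_mul, Pi.pow_apply, Matrix.hadamard_apply, hC,
          Matrix.of_apply, if_neg h.ne', smul_eq_mul]
        simp only [Finset.mul_sum]
        exact Finset.sum_congr rfl fun j _ => by ring
      rw [← hmain, mul_smul_comm, smul_mul_assoc]
  rw [funext hterm]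
  exact h2


lemma hasDerivAt_pow_path {m : ℕ} (A M : Matrix (Fin m) (Fin m) ℝ) (n : ℕ) (θ : ℝ) :
    HasDerivAt (fun t : ℝ => (A + t • M) ^ n)
      (∑ j ∈ Finset.range n, (A + θ • M) ^ j * M * (A + θ • M) ^ (n - 1 - j)) θ := by
  induction n with
  | zero =>
    simp only [pow_zero, Finset.range_zero, Finset.sum_empty]
    exact hasDerivAt_const θ 1
  | succ n ih =>
    have hB : HasDerivAt (fun t : ℝ => A + t • M) M θ := by
      have h := ((hasDerivAt_id θ).smul_const M).const_add A
      simp only [id, one_smul] at h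
      exact h
    have h := hB.mul ih
    have hfun : ((fun t : ℝ => A + t • M) * fun t : ℝ => (A + t • M) ^ n)
        = fun t : ℝ => (A + t • M) ^ (n + 1) := by
      funext t; show (A + t • M) * (A + t • M) ^ n = _; rw [← pow_succ']
    rw [hfun] at h
    refine h.congr_deriv (Eq.symm ?_)
    rw [Finset.sum_range_succ']
    have hs : ∑ i ∈ Finset.range n,
        (A + θ • M) ^ (i+1) * M * (A + θ • M) ^ (n + 1 - 1 - (i+1))
        = (A + θ • M) * ∑ j ∈ Finset.range n,
          (A + θ • M) ^ j * M * (A + θ • M) ^ (n - 1 - j) := by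
      rw [Finset.mul_sum]
      refine Finset.sum_congr rfl fun i _ => ?_
      have e1 : n + 1 - 1 - (i+1) = n - 1 - i := by omega
      rw [e1, pow_succ']; simp only [mul_assoc]
    rw [hs]
    have e0 : n + 1 - 1 - 0 = n := by omega
    rw [e0, pow_zero, one_mul, add_comm]

lemma part2 (m : ℕ) (hm : 0 < m) (Q M : Matrix (Fin m) (Fin m) ℝ) (Δ : ℝ)
    (S : Matrix (Fin m) (Fin m) ℝ)
    (hpart1 : HasSum (fun n : ℕ => if n = 0 then (0 : Matrix (Fin m) (Fin m) ℝ) else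
        (Δ ^ n / (n.factorial : ℝ)) • ∑ j ∈ Finset.range n, Q ^ j * M * Q ^ (n - 1 - j)) S) :
    HasDerivAt (fun θ : ℝ => NormedSpace.exp (Δ • (Q + θ • M))) S 0 := by
  haveI : Nonempty (Fin m) := ⟨⟨0, hm⟩⟩
  set R : ℝ := ‖Q‖ + ‖M‖ + 1 with hR
  have hR0 : 0 ≤ R := by positivity
  set g : ℕ → ℝ → Matrix (Fin m) (Fin m) ℝ :=
    fun n θ => (Δ ^ n / (n.factorial : ℝ)) • (Q + θ • M) ^ n with hg_def
  set g' : ℕ → ℝ → Matrix (Fin m) (Fin m) ℝ :=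
    fun n θ => (Δ ^ n / (n.factorial : ℝ)) •
      ∑ j ∈ Finset.range n, (Q + θ • M) ^ j * M * (Q + θ • M) ^ (n - 1 - j) with hg'_def
  set u : ℕ → ℝ := fun n => |Δ| ^ n / (n.factorial : ℝ) * (n * (‖M‖ * R ^ (n-1))) with hu_def
  have hu : Summable u := by
    rw [← summable_nat_add_iff 1]
    have h1 : Summable (fun n : ℕ => (|Δ| * ‖M‖) * ((|Δ| * R) ^ n / (n.factorial : ℝ))) :=
      (Real.summable_pow_div_factorial (|Δ| * R)).mul_left _
    refine h1.congr fun n => ?_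
    have h2 : ((n+1).factorial : ℝ) = (n+1) * n.factorial := by
      rw [Nat.factorial_succ]; push_cast; ring
    have h3 : (n.factorial : ℝ) ≠ 0 := Nat.cast_ne_zero.2 n.factorial_ne_zero
    simp only [hu_def, Nat.add_sub_cancel, h2, mul_pow, pow_succ]
    push_cast
    field_simp
  have hg : ∀ (n : ℕ) (θ : ℝ), θ ∈ Metric.ball (0:ℝ) 1 → HasDerivAt (g n) (g' n θ) θ :=
    fun n θ _ => by exact (hasDerivAt_pow_path Q M n θ).const_smul (Δ ^ n / (n.factorial : ℝ))
  have hbound : ∀ (n : ℕ) (θ : ℝ), θ ∈ Metric.ball (0:ℝ) 1 → ‖g' n θ‖ ≤ u n := by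
    intro n θ hθ
    have hθ1 : |θ| ≤ 1 := le_of_lt (by simpa [Real.dist_eq] using hθ)
    have hBnorm : ‖Q + θ • M‖ ≤ R := by
      calc ‖Q + θ • M‖ ≤ ‖Q‖ + ‖θ • M‖ := norm_add_le _ _
        _ = ‖Q‖ + |θ| * ‖M‖ := by rw [norm_smul, Real.norm_eq_abs]
        _ ≤ ‖Q‖ + 1 * ‖M‖ := by
            have := mul_le_mul_of_nonneg_right hθ1 (norm_nonneg M)
            linarith
        _ ≤ R := by rw [hR]; linarith
    have hterm : ∀ j ∈ Finset.range n,
        ‖(Q + θ • M) ^ j * M * (Q + θ • M) ^ (n - 1 - j)‖ ≤ ‖M‖ * R ^ (n-1) := by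
      intro j hj
      rw [Finset.mem_range] at hj
      have h1 : ‖(Q + θ • M) ^ j‖ ≤ R ^ j :=
        (norm_pow_le _ j).trans (pow_le_pow_left₀ (norm_nonneg _) hBnorm j)
      have h2 : ‖(Q + θ • M) ^ (n-1-j)‖ ≤ R ^ (n-1-j) :=
        (norm_pow_le _ _).trans (pow_le_pow_left₀ (norm_nonneg _) hBnorm _)
      calc ‖(Q + θ • M) ^ j * M * (Q + θ • M) ^ (n - 1 - j)‖
          ≤ ‖(Q + θ • M) ^ j * M‖ * ‖(Q + θ • M) ^ (n - 1 - j)‖ := norm_mul_le _ _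
        _ ≤ ‖(Q + θ • M) ^ j‖ * ‖M‖ * ‖(Q + θ • M) ^ (n - 1 - j)‖ := by
            exact mul_le_mul_of_nonneg_right (norm_mul_le _ _) (norm_nonneg _)
        _ ≤ R ^ j * ‖M‖ * R ^ (n-1-j) := by
            have hm0 := norm_nonneg M
            have := mul_le_mul (mul_le_mul_of_nonneg_right h1 hm0) h2 (norm_nonneg _)
              (by positivity)
            exact this
        _ = ‖M‖ * (R ^ j * R ^ (n-1-j)) := by ring
        _ = ‖M‖ * R ^ (n-1) := by
            rw [← pow_add]
            congr 2
            omega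
    calc ‖g' n θ‖ = |Δ ^ n / (n.factorial : ℝ)| *
          ‖∑ j ∈ Finset.range n, (Q + θ • M) ^ j * M * (Q + θ • M) ^ (n - 1 - j)‖ := by
          rw [hg'_def]; rw [norm_smul, Real.norm_eq_abs]
      _ ≤ |Δ| ^ n / (n.factorial : ℝ) * (n * (‖M‖ * R ^ (n-1))) := by
          have habs : |Δ ^ n / (n.factorial : ℝ)| = |Δ| ^ n / (n.factorial : ℝ) := by
            rw [abs_div, abs_pow, Nat.abs_cast]
          rw [habs]
          refine mul_le_mul_of_nonneg_left ?_ (by positivity)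
          calc ‖∑ j ∈ Finset.range n, (Q + θ • M) ^ j * M * (Q + θ • M) ^ (n - 1 - j)‖
              ≤ ∑ j ∈ Finset.range n, ‖(Q + θ • M) ^ j * M * (Q + θ • M) ^ (n - 1 - j)‖ :=
                norm_sum_le _ _
            _ ≤ ∑ _j ∈ Finset.range n, ‖M‖ * R ^ (n-1) := Finset.sum_le_sum hterm
            _ = n * (‖M‖ * R ^ (n-1)) := by
                rw [Finset.sum_const, Finset.card_range, nsmul_eq_mul]
      _ = u n := rfl
  have hg0 : Summable (fun n => g n 0) := by
    have h1 := NormedSpace.expSeries_summable' (𝕂 := ℝ) (Δ • Q)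
    refine h1.congr fun n => ?_
    rw [hg_def]
    simp only [zero_smul, add_zero, smul_pow, smul_smul]
    rw [div_eq_mul_inv, mul_comm (Δ ^ n)]
  have main := hasDerivAt_tsum_of_isPreconnected hu Metric.isOpen_ball
    (convex_ball (0:ℝ) 1).isPreconnected hg hbound (Metric.mem_ball_self one_pos) hg0
    (Metric.mem_ball_self one_pos)
  have hfun : (fun θ : ℝ => NormedSpace.exp (Δ • (Q + θ • M)))
      = fun z : ℝ => ∑' n : ℕ, g n z := by
    funext θ
    rw [NormedSpace.exp_eq_tsum (𝕂 := ℝ)]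
    refine tsum_congr fun n => ?_
    rw [hg_def]
    simp only [smul_pow, smul_smul]
    rw [div_eq_mul_inv, mul_comm (Δ ^ n)]
  have hder : (∑' n : ℕ, g' n 0) = S := by
    have hcg : ∀ n : ℕ, g' n 0 = (if n = 0 then (0 : Matrix (Fin m) (Fin m) ℝ) else
        (Δ ^ n / (n.factorial : ℝ)) • ∑ j ∈ Finset.range n, Q ^ j * M * Q ^ (n - 1 - j)) := ?_
    · rw [tsum_congr hcg, hpart1.tsum_eq]
    intro n
    rcases Nat.eq_zero_or_pos n with h | h
    · subst h; simp [hg'_def]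
    · rw [if_neg h.ne', hg'_def]
      simp only [zero_smul, add_zero]
  rw [hfun, ← hder]
  exact main


/-- If `Q = V Λ Uᵀ` with `Λ = diagonal lam` having pairwise distinct entries and
`Uᵀ = V⁻¹` (`V` invertible), then for any `m × m` matrix `M` and real `Δ`, the directional
derivative series of the matrix exponential satisfies
`∑_{n ≥ 1} (Δⁿ/n!) ∑_{j=0}^{n-1} Qʲ M Q^{n-1-j} = V ((Uᵀ M V) ⊙ X(Λ,Δ)) Uᵀ`; in particular
this is the derivative of `θ ↦ exp (Δ (Q + θ M))` at `θ = 0`. -/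
theorem eigendecomposition_exp_derivative_formula (m : ℕ)
    (Q V U : Matrix (Fin m) (Fin m) ℝ) (lam : Fin m → ℝ)
    (hdist : Function.Injective lam)
    (hV : IsUnit V.det)
    (hU : U.transpose = V⁻¹)
    (hQ : Q = V * Matrix.diagonal lam * U.transpose)
    (M : Matrix (Fin m) (Fin m) ℝ) (Δ : ℝ) :
    HasSum (fun n : ℕ => if n = 0 then (0 : Matrix (Fin m) (Fin m) ℝ) else
        (Δ ^ n / (n.factorial : ℝ)) • ∑ j ∈ Finset.range n, Q ^ j * M * Q ^ (n - 1 - j))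
      (V * Matrix.hadamard (U.transpose * M * V) (Matrix.of fun i j =>
        if i = j then Δ * Real.exp (Δ * lam i)
        else (Real.exp (Δ * lam i) - Real.exp (Δ * lam j)) / (lam i - lam j)) * U.transpose) ∧
    HasDerivAt (fun θ : ℝ => NormedSpace.exp (Δ • (Q + θ • M)))
      (V * Matrix.hadamard (U.transpose * M * V) (Matrix.of fun i j =>
        if i = j then Δ * Real.exp (Δ * lam i)
        else (Real.exp (Δ * lam i) - Real.exp (Δ * lam j)) / (lam i - lam j)) * U.transpose)
      0 := by
  have hpart1 := part1 m Q V U lam hdist hV hU hQ M Δ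
  refine ⟨hpart1, ?_⟩
  rcases Nat.eq_zero_or_pos m with hm | hm
  · subst hm
    haveI : Subsingleton (Matrix (Fin 0) (Fin 0) ℝ) := ⟨fun a b => funext fun i => i.elim0⟩
    set T := V * Matrix.hadamard (U.transpose * M * V) (Matrix.of fun i j =>
        if i = j then Δ * Real.exp (Δ * lam i)
        else (Real.exp (Δ * lam i) - Real.exp (Δ * lam j)) / (lam i - lam j)) * U.transpose with hT
    have h1 : (fun θ : ℝ => NormedSpace.exp (Δ • (Q + θ • M))) = fun _ => T :=
      funext fun θ => Subsingleton.elim _ _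
    rw [h1]
    have h2 := hasDerivAt_const (0:ℝ) T
    rwa [Subsingleton.elim (0 : Matrix (Fin 0) (Fin 0) ℝ) T] at h2
  · exact part2 m hm Q M Δ _ hpart1
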